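/- (Weighted Poincaré inequality with quadratic weight) Let ρ(x) = 1 - x/L on (0, L). For every function φ ∈ H¹_loc(0,L) with φ(0) = 0, ρ·φ ∈ L²(0,L), and ρ²·φ' ∈ L²(0,L), one has ‖ρφ‖_{L²(0,L)} ≤ (2L/3)·‖ρ²φ'‖_{L²(0,L)}. -/

import Mathlib

open Set MeasureTheory

theorem stmt6 (L : ℝ) (hL : 0 < L) (ρ : ℝ → ℝ) (hρ : ∀ x, ρ x = 1 - x / L)
    (φ φ' : ℝ → ℝ)
    (hcont : ContinuousOn φ (Icc 0 L))
    (hderiv : ∀ x ∈ Ioo (0:ℝ) L, HasDerivAt φ (φ' x) x)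
    (h0 : φ 0 = 0)
    (hφL2 : IntegrableOn (fun x => (ρ x * φ x) ^ 2) (Ioo 0 L))
    (hdL2 : IntegrableOn (fun x => ((ρ x) ^ 2 * φ' x) ^ 2) (Ioo 0 L)) :
    Real.sqrt (∫ x in Ioo (0:ℝ) L, (ρ x * φ x) ^ 2) ≤
      (2 * L / 3) * Real.sqrt (∫ x in Ioo (0:ℝ) L, ((ρ x) ^ 2 * φ' x) ^ 2) := by
  have hLne : L ≠ 0 := hL.ne'
  have hρe : ρ = fun x => 1 - x / L := funext hρ
  set μ := volume.restrict (Ioo (0:ℝ) L) with hμdef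
  set f : ℝ → ℝ := fun x => ρ x * φ x with hfdef
  set g : ℝ → ℝ := fun x => ρ x ^ 2 * φ' x with hgdef
  have hρc : Continuous ρ := by
    rw [hρe]; exact continuous_const.sub (continuous_id.div_const L)
  -- measurability
  have hfm : AEStronglyMeasurable f μ :=
    ((hρc.continuousOn.mul (hcont.mono Ioo_subset_Icc_self)).aestronglyMeasurable
      measurableSet_Ioo)
  have hgm : AEStronglyMeasurable g μ := by
    have heq : (fun x => ρ x ^ 2 * deriv φ x) =ᵐ[μ] g := by
      rw [Filter.EventuallyEq, ae_restrict_iff' measurableSet_Ioo]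
      filter_upwards with x hx
      simp only [hgdef]
      rw [(hderiv x hx).deriv]
    exact (((hρc.pow 2).measurable.mul (measurable_deriv φ)).aestronglyMeasurable).congr heq
  have hφL2' : Integrable (fun x => f x ^ 2) μ := hφL2
  have hdL2' : Integrable (fun x => g x ^ 2) μ := hdL2
  have hf2 : MemLp f 2 μ := (memLp_two_iff_integrable_sq hfm).2 hφL2'
  have hg2 : MemLp g 2 μ := (memLp_two_iff_integrable_sq hgm).2 hdL2'
  have hfg : Integrable (fun x => f x * g x) μ := by
    have h := hg2.smul (𝕜 := ℝ) hf2 (r := 1)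
      (hpqr := ⟨by rw [ENNReal.inv_two_add_inv_two, inv_one]⟩)
    rw [memLp_one_iff_integrable] at h
    exact h
  -- integration by parts
  have hρd : ∀ x : ℝ, HasDerivAt ρ (-(1/L)) x := by
    intro x
    rw [hρe]
    simpa using ((hasDerivAt_id x).div_const L).const_sub 1
  set F : ℝ → ℝ := fun x => ρ x ^ 3 * φ x ^ 2 with hFdef
  set G : ℝ → ℝ := fun x => -(3/L) * f x ^ 2 + 2 * (f x * g x) with hGdef
  have hFd : ∀ x ∈ Ioo (0:ℝ) L, HasDerivAt F (G x) x := by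
    intro x hx
    have h : HasDerivAt (fun y => ρ y ^ 3 * φ y ^ 2) _ x := ((hρd x).pow 3).mul ((hderiv x hx).pow 2)
    convert h using 1
    simp only [hGdef, hfdef, hgdef, Pi.pow_apply]
    push_cast
    ring
  have hGint : IntegrableOn G (Ioo 0 L) :=
    (hφL2'.const_mul (-(3/L))).add (hfg.const_mul 2)
  have hFcont : ContinuousOn F (Icc 0 L) :=
    ((hρc.pow 3).continuousOn).mul (hcont.pow 2)
  have hiv : ∫ x in (0:ℝ)..L, G x = F L - F 0 :=
    intervalIntegral.integral_eq_sub_of_hasDerivAt_of_le hL.le hFcont hFd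
      ((intervalIntegrable_iff_integrableOn_Ioo_of_le hL.le).2 hGint)
  have hF0 : F 0 = 0 := by simp [hFdef, h0]
  have hFL : F L = 0 := by simp [hFdef, hρ L, div_self hLne]
  have hG0 : ∫ x, G x ∂μ = 0 := by
    rw [hμdef, ← MeasureTheory.integral_Ioc_eq_integral_Ioo,
      ← intervalIntegral.integral_of_le hL.le, hiv, hF0, hFL, sub_zero]
  set A := ∫ x, f x ^ 2 ∂μ with hAdef
  set B := ∫ x, g x ^ 2 ∂μ with hBdef
  set I := ∫ x, f x * g x ∂μ with hIdef
  have hsplit : ∫ x, G x ∂μ = -(3/L) * A + 2 * I := by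
    rw [hGdef]
    rw [integral_add (hφL2'.const_mul (-(3/L))) (hfg.const_mul 2),
      integral_const_mul, integral_const_mul]
  have hAI : A = 2 * L / 3 * I := by
    have : -(3/L) * A + 2 * I = 0 := by rw [← hsplit, hG0]
    field_simp at this ⊢
    linarith
  have hA0 : 0 ≤ A := integral_nonneg fun x => sq_nonneg _
  have hB0 : 0 ≤ B := integral_nonneg fun x => sq_nonneg _
  -- Cauchy-Schwarz
  have hCS : I ≤ Real.sqrt A * Real.sqrt B := by
    have habs : Integrable (fun x => ‖f x‖ * ‖g x‖) μ := by
      simpa [Real.norm_eq_abs, abs_mul] using hfg.abs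
    have h1 : I ≤ ∫ x, ‖f x‖ * ‖g x‖ ∂μ := by
      refine integral_mono hfg habs fun x => ?_
      calc f x * g x ≤ |f x * g x| := le_abs_self _
        _ = ‖f x‖ * ‖g x‖ := by rw [abs_mul]; rfl
    have hpq : Real.HolderConjugate 2 2 := ⟨by norm_num, by norm_num, by norm_num⟩
    have h2 := MeasureTheory.integral_mul_norm_le_Lp_mul_Lq (μ := μ) hpq
      (by rw [show ENNReal.ofReal 2 = 2 by norm_num]; exact hf2)
      (by rw [show ENNReal.ofReal 2 = 2 by norm_num]; exact hg2)
    have hnorm : ∀ y : ℝ, ‖y‖ ^ (2:ℝ) = y ^ 2 := fun y => by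
      rw [show (2:ℝ) = ((2:ℕ):ℝ) by norm_num, Real.rpow_natCast]
      simp [Real.norm_eq_abs, sq_abs]
    simp_rw [hnorm] at h2
    rw [← Real.sqrt_eq_rpow, ← Real.sqrt_eq_rpow] at h2
    exact h1.trans h2
  -- conclude
  have hgoal : Real.sqrt A ≤ 2 * L / 3 * Real.sqrt B := by
    rcases eq_or_lt_of_le (Real.sqrt_nonneg A) with h | h
    · rw [← h]
      positivity
    · have hkey : Real.sqrt A * Real.sqrt A ≤ (2 * L / 3 * Real.sqrt B) * Real.sqrt A := by
        rw [Real.mul_self_sqrt hA0]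
        calc A = 2 * L / 3 * I := hAI
          _ ≤ 2 * L / 3 * (Real.sqrt A * Real.sqrt B) := by
              apply mul_le_mul_of_nonneg_left hCS
              positivity
          _ = (2 * L / 3 * Real.sqrt B) * Real.sqrt A := by ring
      exact le_of_mul_le_mul_right hkey h
  exact hgoal
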